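/- The following two statements are equivalent. Statement A: for all integers β, n with (β ≠ 0 or n > 0) such that (1, 0, −β, −n) = γ₁ + γ₂ for some γ₁, γ₂ ∈ 𝒞 with Θ(γ₁) < Θ(γ₂), and for all integers c ≠ 0 and d with d³ − 3βc²d − nc³ = 1, the rational number −d/c does not satisfy Θ(γ₁) < −d/c < Θ(γ₂) (where the condition −d/c < Θ(γ₂) is automatically satisfied when Θ(γ₂) = ∞). Statement B: for all such β, n, γ₁, γ₂, c, d, if Θ(γ₁) ≤ −d/c and −d/c < Θ(γ₂) (the latter automatic when Θ(γ₂) = ∞), then β' = 0 and n' ≤ 0, where β' = d²β + ncd + β²c² and n' = 6β²d²c + 6c²dβn + n + 2c³n² − 2c³β³. -/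

import Mathlib

/-- The semihomogeneous class `r·(p³, p²q, pq², q³) ∈ ℤ⁴`. -/
def sh (p q r : ℤ) : ℤ × ℤ × ℤ × ℤ :=
  (r * p ^ 3, r * p ^ 2 * q, r * p * q ^ 2, r * q ^ 3)

/-- The slope `Θ = q/p ∈ ℚ ∪ {∞}` of a semihomogeneous class with parameters `(p, q)`,
where `Θ = ∞` (the top element) when `p = 0`. -/
def Theta (p q : ℤ) : WithTop ℚ :=
  if p = 0 then ⊤ else ((q : ℚ) / (p : ℚ) : ℚ)

lemma cube_le_neg_one {x : ℤ} (h : x ≤ -1) : x^3 ≤ -1 := by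
  nlinarith [sq_nonneg x, sq_nonneg (x+1)]

lemma one_le_cube {x : ℤ} (h : 1 ≤ x) : 1 ≤ x^3 := by
  nlinarith [sq_nonneg x, sq_nonneg (x-1)]

lemma sgn_neg {a b : ℤ} (h : 0 < a*b) (ha : a < 0) : b < 0 := by nlinarith

lemma sgn_pos {a b : ℤ} (h : 0 < a*b) (ha : 0 < a) : 0 < b := by nlinarith

lemma int_le_neg {a : ℤ} (h : a < 0) : a ≤ -1 := by omega

lemma int_ge_one {a : ℤ} (h : 0 < a) : 1 ≤ a := by omega

lemma mul_le_neg_one {a b : ℤ} (ha : 1 ≤ a) (hb : b ≤ -1) : a*b ≤ -1 := by nlinarith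

lemma one_le_mul_int {a b : ℤ} (ha : 1 ≤ a) (hb : 1 ≤ b) : 1 ≤ a*b := by nlinarith

lemma theta_lt_coe (p q : ℤ) (x : ℚ) :
    Theta p q < (x : WithTop ℚ) ↔ p ≠ 0 ∧ (q:ℚ)/p < x := by
  unfold Theta; split_ifs with h
  · simp [h]
  · simp [h, WithTop.coe_lt_coe]

lemma coe_lt_theta (p q : ℤ) (x : ℚ) :
    (x : WithTop ℚ) < Theta p q ↔ p = 0 ∨ x < (q:ℚ)/p := by
  unfold Theta; split_ifs with h
  · simp [h, WithTop.coe_lt_top]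
  · simp [h, WithTop.coe_lt_coe]

lemma theta_le_coe (p q : ℤ) (x : ℚ) :
    Theta p q ≤ (x : WithTop ℚ) ↔ p ≠ 0 ∧ (q:ℚ)/p ≤ x := by
  unfold Theta; split_ifs with h
  · simp [h]
  · simp [h, WithTop.coe_le_coe]

lemma theta_eq_coe (p q : ℤ) (x : ℚ) :
    Theta p q = (x : WithTop ℚ) ↔ p ≠ 0 ∧ (q:ℚ)/p = x := by
  unfold Theta; split_ifs with h
  · simp [h]
  · simp [h, WithTop.coe_eq_coe]

lemma lt_ndc (p q c d : ℤ) (hp : p ≠ 0) (hc : c ≠ 0) :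
    (q:ℚ)/p < -(d:ℚ)/c ↔ (d*p+c*q)*(c*p) < 0 := by
  have hpQ : (p:ℚ) ≠ 0 := Int.cast_ne_zero.mpr hp
  have hcQ : (c:ℚ) ≠ 0 := Int.cast_ne_zero.mpr hc
  rw [← sub_pos]
  have h : -(d:ℚ)/c - (q:ℚ)/p = ((-((d*p+c*q)*(c*p)) : ℤ) : ℚ) / (((c*p)*(c*p) : ℤ) : ℚ) := by
    push_cast; field_simp; ring
  rw [h, div_pos_iff]
  constructor
  · rintro (⟨h1, _⟩ | ⟨_, h2⟩)
    · have : 0 < -((d*p+c*q)*(c*p)) := by exact_mod_cast h1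
      linarith
    · have hsq : (0:ℚ) ≤ (((c*p)*(c*p) : ℤ) : ℚ) := by
        exact_mod_cast mul_self_nonneg (c*p)
      exact absurd h2 (not_lt.mpr hsq)
  · intro h1
    left
    constructor
    · have : 0 < -((d*p+c*q)*(c*p)) := by linarith
      exact_mod_cast this
    · have hne : ((c*p)*(c*p) : ℤ) ≠ 0 :=
        mul_ne_zero (mul_ne_zero hc hp) (mul_ne_zero hc hp)
      have h2 : (0:ℚ) ≤ (((c*p)*(c*p) : ℤ) : ℚ) := by
        exact_mod_cast mul_self_nonneg (c*p)
      have h3 : (((c*p)*(c*p) : ℤ) : ℚ) ≠ 0 := Int.cast_ne_zero.mpr hne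
      exact lt_of_le_of_ne h2 (Ne.symm h3)

lemma le_ndc (p q c d : ℤ) (hp : p ≠ 0) (hc : c ≠ 0) :
    (q:ℚ)/p ≤ -(d:ℚ)/c ↔ (d*p+c*q)*(c*p) ≤ 0 := by
  constructor
  · intro h
    rcases eq_or_lt_of_le h with he | hl
    · have hpQ : (p:ℚ) ≠ 0 := Int.cast_ne_zero.mpr hp
      have hcQ : (c:ℚ) ≠ 0 := Int.cast_ne_zero.mpr hc
      have : ((d*p+c*q : ℤ) : ℚ) = 0 := by
        field_simp at he
        push_cast
        linarith
      have h0 : d*p+c*q = 0 := by exact_mod_cast this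
      rw [h0]; simp
    · exact le_of_lt ((lt_ndc p q c d hp hc).mp hl)
  · intro h
    rcases eq_or_lt_of_le h with he | hl
    · -- product zero: since cp ≠ 0, d*p+c*q = 0, so q/p = -d/c
      have hcp : c*p ≠ 0 := mul_ne_zero hc hp
      have h0 : d*p+c*q = 0 := by
        rcases mul_eq_zero.mp he with h' | h'
        · exact h'
        · exact absurd h' hcp
      have hpQ : (p:ℚ) ≠ 0 := Int.cast_ne_zero.mpr hp
      have hcQ : (c:ℚ) ≠ 0 := Int.cast_ne_zero.mpr hc
      have : ((d:ℚ)*p+c*q) = 0 := by exact_mod_cast h0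
      have : (q:ℚ)/p = -(d:ℚ)/c := by
        rw [div_eq_div_iff hpQ hcQ]; linarith
      exact le_of_eq this
    · exact le_of_lt ((lt_ndc p q c d hp hc).mpr hl)

lemma ndc_lt (p q c d : ℤ) (hp : p ≠ 0) (hc : c ≠ 0) :
    -(d:ℚ)/c < (q:ℚ)/p ↔ 0 < (d*p+c*q)*(c*p) := by
  rw [← not_le, ← not_le, le_ndc p q c d hp hc]

lemma hess (r₁ r₂ P₁ Q₁ P₂ Q₂ : ℤ) (h₀ : r₁*P₁^3 + r₂*P₂^3 = 1)
    (h₁ : r₁*P₁^2*Q₁ + r₂*P₂^2*Q₂ = 0) (h₂ : r₁*P₁*Q₁^2 + r₂*P₂*Q₂^2 = 0) :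
    r₁*r₂*(P₁*Q₂-Q₁*P₂)^2*(P₁*P₂) = 0 := by
  linear_combination (r₁*P₁*Q₁^2 + r₂*P₂*Q₂^2)*h₀ + h₂ - (r₁*P₁^2*Q₁ + r₂*P₂^2*Q₂)*h₁

lemma cross_ne (p₁ q₁ p₂ q₂ : ℤ) (hg₂ : Int.gcd p₂ q₂ = 1)
    (h : Theta p₁ q₁ < Theta p₂ q₂) : p₁*q₂ - q₁*p₂ ≠ 0 := by
  by_cases h₂ : p₂ = 0
  · have hq₂ : q₂ ≠ 0 := by
      intro h0; rw [h₂, h0] at hg₂; simp at hg₂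
    have hp₁ : p₁ ≠ 0 := by
      intro h0
      rw [h₂] at h
      unfold Theta at h
      rw [if_pos h0, if_pos rfl] at h
      exact lt_irrefl _ h
    rw [h₂]
    simpa using mul_ne_zero hp₁ hq₂
  · have hth : Theta p₂ q₂ = ((q₂:ℚ)/p₂ : ℚ) := by unfold Theta; rw [if_neg h₂]
    rw [hth] at h
    obtain ⟨hp₁, hlt⟩ := (theta_lt_coe p₁ q₁ _).mp h
    intro h0
    have hpQ : (p₁:ℚ) ≠ 0 := Int.cast_ne_zero.mpr hp₁
    have hpQ2 : (p₂:ℚ) ≠ 0 := Int.cast_ne_zero.mpr h₂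
    have : (q₁:ℚ)/p₁ = (q₂:ℚ)/p₂ := by
      rw [div_eq_div_iff hpQ hpQ2]
      have h0' : p₁*q₂ = q₁*p₂ := by linarith
      have h0Q : (p₁:ℚ)*q₂ = (q₁:ℚ)*p₂ := by exact_mod_cast h0'
      linarith
    rw [this] at hlt
    exact lt_irrefl _ hlt

set_option maxHeartbeats 1000000 in
/-- Lemma 5.10 (conj:equiv): Statement A (Conjecture 5.9: `−d/c` never lies in the
open interval `(Θ(γ₁), Θ(γ₂))`) is equivalent to Statement B (whenever
`Θ(γ₁) ≤ −d/c < Θ(γ₂)`, one has `β' = 0` and `n' ≤ 0`). -/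
theorem stmt16 :
    (∀ β n p₁ q₁ r₁ p₂ q₂ r₂ c d : ℤ,
      (β ≠ 0 ∨ 0 < n) →
      r₁ ≠ 0 → r₂ ≠ 0 → Int.gcd p₁ q₁ = 1 → Int.gcd p₂ q₂ = 1 →
      ((1, 0, -β, -n) : ℤ × ℤ × ℤ × ℤ) = sh p₁ q₁ r₁ + sh p₂ q₂ r₂ →
      Theta p₁ q₁ < Theta p₂ q₂ →
      c ≠ 0 → d ^ 3 - 3 * β * c ^ 2 * d - n * c ^ 3 = 1 →
      ¬ (Theta p₁ q₁ < ((-(d : ℚ) / (c : ℚ) : ℚ) : WithTop ℚ) ∧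
          ((-(d : ℚ) / (c : ℚ) : ℚ) : WithTop ℚ) < Theta p₂ q₂))
    ↔
    (∀ β n p₁ q₁ r₁ p₂ q₂ r₂ c d : ℤ,
      (β ≠ 0 ∨ 0 < n) →
      r₁ ≠ 0 → r₂ ≠ 0 → Int.gcd p₁ q₁ = 1 → Int.gcd p₂ q₂ = 1 →
      ((1, 0, -β, -n) : ℤ × ℤ × ℤ × ℤ) = sh p₁ q₁ r₁ + sh p₂ q₂ r₂ →
      Theta p₁ q₁ < Theta p₂ q₂ →
      c ≠ 0 → d ^ 3 - 3 * β * c ^ 2 * d - n * c ^ 3 = 1 →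
      (Theta p₁ q₁ ≤ ((-(d : ℚ) / (c : ℚ) : ℚ) : WithTop ℚ) ∧
          ((-(d : ℚ) / (c : ℚ) : ℚ) : WithTop ℚ) < Theta p₂ q₂) →
      (d ^ 2 * β + n * c * d + β ^ 2 * c ^ 2 = 0 ∧
        6 * β ^ 2 * d ^ 2 * c + 6 * c ^ 2 * d * β * n + n + 2 * c ^ 3 * n ^ 2
            - 2 * c ^ 3 * β ^ 3 ≤ 0)) := by
  constructor
  · -- A → B
    intro hA β n p₁ q₁ r₁ p₂ q₂ r₂ c d hβn hr₁ hr₂ hg₁ hg₂ hsum hθ hc hD hxx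
    obtain ⟨hle, hlt2⟩ := hxx
    have hnot := hA β n p₁ q₁ r₁ p₂ q₂ r₂ c d hβn hr₁ hr₂ hg₁ hg₂ hsum hθ hc hD
    have hxle : ((-(d : ℚ) / (c : ℚ) : ℚ) : WithTop ℚ) ≤ Theta p₁ q₁ :=
      not_lt.mp (fun h => hnot ⟨h, hlt2⟩)
    have heq := le_antisymm hle hxle
    obtain ⟨hp₁, hdiv⟩ := (theta_eq_coe p₁ q₁ _).mp heq
    have hpQ : (p₁:ℚ) ≠ 0 := Int.cast_ne_zero.mpr hp₁
    have hcQ : (c:ℚ) ≠ 0 := Int.cast_ne_zero.mpr hc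
    have hP₁ : d*p₁+c*q₁ = 0 := by
      rw [div_eq_div_iff hpQ hcQ] at hdiv
      have : ((d*p₁+c*q₁ : ℤ):ℚ) = 0 := by push_cast; linarith
      exact_mod_cast this
    simp only [sh, Prod.mk_add_mk, Prod.mk.injEq] at hsum
    obtain ⟨h0, h1, h2, h3⟩ := hsum
    -- transformed equations
    have hE0 : r₁*(d*p₁+c*q₁)^3 + r₂*(d*p₂+c*q₂)^3 = 1 := by
      linear_combination (-(d^3))*h0 + (-(3*d^2*c))*h1 + (-(3*d*c^2))*h2 + (-(c^3))*h3 + hD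
    have hE1 : r₁*(d*p₁+c*q₁)^2*((2*β*c*d+n*c^2)*p₁+(d^2-β*c^2)*q₁) + r₂*(d*p₂+c*q₂)^2*((2*β*c*d+n*c^2)*p₂+(d^2-β*c^2)*q₂) = 0 := by
      linear_combination (-(d^2*(2*β*c*d+n*c^2)))*h0 + (-(d^2*(d^2-β*c^2)+2*d*c*(2*β*c*d+n*c^2)))*h1
        + (-(2*d*c*(d^2-β*c^2)+c^2*(2*β*c*d+n*c^2)))*h2 + (-(c^2*(d^2-β*c^2)))*h3
    have hE2 : r₁*(d*p₁+c*q₁)*((2*β*c*d+n*c^2)*p₁+(d^2-β*c^2)*q₁)^2 + r₂*(d*p₂+c*q₂)*((2*β*c*d+n*c^2)*p₂+(d^2-β*c^2)*q₂)^2 = -(d^2*β + n*c*d + β^2*c^2) := by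
      linear_combination (-(d*(2*β*c*d+n*c^2)^2))*h0 + (-(2*d*(2*β*c*d+n*c^2)*(d^2-β*c^2)+c*(2*β*c*d+n*c^2)^2))*h1
        + (-(d*(d^2-β*c^2)^2+2*c*(2*β*c*d+n*c^2)*(d^2-β*c^2)))*h2 + (-(c*(d^2-β*c^2)^2))*h3 + (-(n*c*d) - β*d^2 - β^2*c^2)*hD
    have hE3 : r₁*((2*β*c*d+n*c^2)*p₁+(d^2-β*c^2)*q₁)^3 + r₂*((2*β*c*d+n*c^2)*p₂+(d^2-β*c^2)*q₂)^3 = -(6*β^2*d^2*c + 6*c^2*d*β*n + n + 2*c^3*n^2 - 2*c^3*β^3) := by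
      linear_combination (-((2*β*c*d+n*c^2)^3))*h0 + (-(3*(2*β*c*d+n*c^2)^2*(d^2-β*c^2)))*h1
        + (-(3*(2*β*c*d+n*c^2)*(d^2-β*c^2)^2))*h2 + (-((d^2-β*c^2)^3))*h3 + (-n - n*d^3 - n^2*c^3 - 3*β*n*c^2*d - 6*β^2*c*d^2 + 2*β^3*c^3)*hD
    have hB2 : r₂*(d*p₂+c*q₂)^3 = 1 := by
      linear_combination hE0 - r₁*(d*p₁+c*q₁)^2*hP₁
    have hC : r₂*(d*p₂+c*q₂)^2*((2*β*c*d+n*c^2)*p₂+(d^2-β*c^2)*q₂) = 0 := by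
      linear_combination hE1 - r₁*(d*p₁+c*q₁)*((2*β*c*d+n*c^2)*p₁+(d^2-β*c^2)*q₁)*hP₁
    have hQ₂ : ((2*β*c*d+n*c^2)*p₂+(d^2-β*c^2)*q₂) = 0 := by
      linear_combination (d*p₂+c*q₂)*hC - ((2*β*c*d+n*c^2)*p₂+(d^2-β*c^2)*q₂)*hB2
    have hP₂u : (d*p₂+c*q₂) = 1 ∨ (d*p₂+c*q₂) = -1 := by
      have hu : IsUnit (d*p₂+c*q₂) :=
        IsUnit.of_mul_eq_one (r₂*(d*p₂+c*q₂)^2) (by linear_combination hB2)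
      exact Int.isUnit_iff.mp hu
    have hP₂sq : (d*p₂+c*q₂)^2 = 1 := by rcases hP₂u with h|h <;> rw [h] <;> ring
    -- inversion
    have hp1e : p₁ = -(c*((2*β*c*d+n*c^2)*p₁+(d^2-β*c^2)*q₁)) := by
      linear_combination (d^2-β*c^2)*hP₁ - p₁*hD
    have hq1e : q₁ = d*((2*β*c*d+n*c^2)*p₁+(d^2-β*c^2)*q₁) := by
      linear_combination (-(2*β*c*d+n*c^2))*hP₁ - q₁*hD
    have hp2e : p₂ = (d^2-β*c^2)*(d*p₂+c*q₂) := by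
      linear_combination (-c)*hQ₂ - p₂*hD
    have hQ₁u : ((2*β*c*d+n*c^2)*p₁+(d^2-β*c^2)*q₁) = 1 ∨ ((2*β*c*d+n*c^2)*p₁+(d^2-β*c^2)*q₁) = -1 := by
      have hd1 : ((2*β*c*d+n*c^2)*p₁+(d^2-β*c^2)*q₁) ∣ p₁ := ⟨-c, by linear_combination hp1e⟩
      have hd2 : ((2*β*c*d+n*c^2)*p₁+(d^2-β*c^2)*q₁) ∣ q₁ := ⟨d, by linear_combination hq1e⟩
      have : ((2*β*c*d+n*c^2)*p₁+(d^2-β*c^2)*q₁) ∣ ((Int.gcd p₁ q₁ : ℤ)) := Int.dvd_coe_gcd hd1 hd2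
      rw [hg₁] at this
      exact Int.isUnit_iff.mp (isUnit_of_dvd_one (by exact_mod_cast this))
    have hQ₁sq : ((2*β*c*d+n*c^2)*p₁+(d^2-β*c^2)*q₁)^2 = 1 := by rcases hQ₁u with h|h <;> rw [h] <;> ring
    constructor
    · linear_combination hE2 - r₁*((2*β*c*d+n*c^2)*p₁+(d^2-β*c^2)*q₁)^2*hP₁ - r₂*(d*p₂+c*q₂)*((2*β*c*d+n*c^2)*p₂+(d^2-β*c^2)*q₂)*hQ₂
    · -- n' ≤ 0
      have hn'eq : r₁*((2*β*c*d+n*c^2)*p₁+(d^2-β*c^2)*q₁)^3 = -(6*β^2*d^2*c + 6*c^2*d*β*n + n + 2*c^3*n^2 - 2*c^3*β^3) := by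
        linear_combination hE3 - r₂*((2*β*c*d+n*c^2)*p₂+(d^2-β*c^2)*q₂)^2*hQ₂
      by_contra hNpos
      push_neg at hNpos
      obtain ⟨N, hNdef⟩ : ∃ N : ℤ, N = (6*β^2*d^2*c + 6*c^2*d*β*n + n + 2*c^3*n^2 - 2*c^3*β^3) := ⟨_, rfl⟩
      rw [← hNdef] at hNpos hn'eq
      -- key: G^3 + N c^3 = 1
      have hkey : (d^2-β*c^2)^3 + N*c^3 = 1 := by
        linear_combination (-1)*h0 - r₁*(p₁^2 - c*p₁*((2*β*c*d+n*c^2)*p₁+(d^2-β*c^2)*q₁) + c^2*((2*β*c*d+n*c^2)*p₁+(d^2-β*c^2)*q₁)^2)*hp1e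
          - r₂*(p₂^2 + p₂*(d^2-β*c^2)*(d*p₂+c*q₂) + (d^2-β*c^2)^2*(d*p₂+c*q₂)^2)*hp2e
          - (d^2-β*c^2)^3*hB2 + c^3*hn'eq
      -- sign condition from hlt2
      rw [coe_lt_theta] at hlt2
      have hsplit : (d^2-β*c^2) = 0 ∨ 0 < c*(d^2-β*c^2) := by
        rcases eq_or_ne p₂ 0 with hp20 | hp2ne
        · left
          linear_combination (-(d^2-β*c^2))*hP₂sq - (d*p₂+c*q₂)*hp2e + (d*p₂+c*q₂)*hp20
        · right
          rcases hlt2 with h | h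
          · exact absurd h hp2ne
          · have hpos := (ndc_lt p₂ q₂ c d hp2ne hc).mp h
            have key : (d*p₂+c*q₂)*(c*p₂) = c*(d^2-β*c^2)*(d*p₂+c*q₂)^2 := by
              linear_combination c*(d*p₂+c*q₂)*hp2e
            rw [key, hP₂sq, mul_one] at hpos
            exact hpos
      rcases hsplit with hG0 | hcg
      · -- g = 0 case
        have hNc : N*c^3 = 1 := by rw [hG0] at hkey; linarith only [hkey]
        have hcu : c = 1 ∨ c = -1 := by
          have : IsUnit c := IsUnit.of_mul_eq_one (N*c^2) (by linear_combination hNc)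
          exact Int.isUnit_iff.mp this
        have hc1 : c = 1 := by
          rcases hcu with h|h
          · exact h
          · exfalso; rw [h] at hNc; norm_num at hNc; omega
        -- p₂ = 0
        have hp20 : p₂ = 0 := by rw [hp2e, hG0]; ring
        -- q₁ = 0
        have hp1sq : p₁^2 = 1 := by
          have hx : p₁^2 = c^2*((2*β*c*d+n*c^2)*p₁+(d^2-β*c^2)*q₁)^2 := by
            linear_combination (p₁ - c*((2*β*c*d+n*c^2)*p₁+(d^2-β*c^2)*q₁))*hp1e
          rw [hQ₁sq, hc1] at hx; simpa using hx
        have hr1q1 : r₁*p₁^2*q₁ = 0 := by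
          linear_combination (-1)*h1 - r₂*p₂*q₂*hp20
        have hr1q1' : r₁*q₁ = 0 := by
          linear_combination hr1q1 - r₁*q₁*hp1sq
        have hq10 : q₁ = 0 := by
          rcases mul_eq_zero.mp hr1q1' with h|h
          · exact absurd h hr₁
          · exact h
        have hd0 : d = 0 := by
          rcases hQ₁u with h|h <;> rw [h] at hq1e <;> omega
        have hβ0 : β = 0 := by
          rw [hd0, hc1] at hG0; linarith
        have hn1 : n = -1 := by
          rw [hd0, hβ0, hc1] at hD; linarith
        rcases hβn with h|h
        · exact h hβ0
        · omega
      · -- cg > 0 case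
        exfalso
        rcases lt_trichotomy c 0 with hcneg | hc0 | hcpos
        · have hGneg : (d^2-β*c^2) < 0 := sgn_neg hcg hcneg
          have e1 : (d^2-β*c^2)^3 ≤ -1 := cube_le_neg_one (int_le_neg hGneg)
          have e2 : c^3 ≤ -1 := cube_le_neg_one (int_le_neg hcneg)
          have e3 : N*c^3 ≤ -1 := mul_le_neg_one (int_ge_one hNpos) e2
          linarith only [hkey, e1, e3]
        · exact hc hc0
        · have hGpos : 0 < (d^2-β*c^2) := sgn_pos hcg hcpos
          have e1 : 1 ≤ (d^2-β*c^2)^3 := one_le_cube (int_ge_one hGpos)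
          have e2 : 1 ≤ c^3 := one_le_cube (int_ge_one hcpos)
          have e3 : 1 ≤ N*c^3 := one_le_mul_int (int_ge_one hNpos) e2
          linarith only [hkey, e1, e3]
  · -- B → A
    intro hB β n p₁ q₁ r₁ p₂ q₂ r₂ c d hβn hr₁ hr₂ hg₁ hg₂ hsum hθ hc hD hxx
    obtain ⟨hlt1, hlt2⟩ := hxx
    obtain ⟨hβ'0, hN0⟩ := hB β n p₁ q₁ r₁ p₂ q₂ r₂ c d hβn hr₁ hr₂ hg₁ hg₂ hsum hθ hc hD
      ⟨le_of_lt hlt1, hlt2⟩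
    simp only [sh, Prod.mk_add_mk, Prod.mk.injEq] at hsum
    obtain ⟨h0, h1, h2, h3⟩ := hsum
    obtain ⟨hp₁, hlt1'⟩ := (theta_lt_coe p₁ q₁ _).mp hlt1
    have hlt1i := (lt_ndc p₁ q₁ c d hp₁ hc).mp hlt1'
    have hP₁ne : (d*p₁+c*q₁) ≠ 0 := by
      intro h; rw [h] at hlt1i; simp at hlt1i
    have hE0 : r₁*(d*p₁+c*q₁)^3 + r₂*(d*p₂+c*q₂)^3 = 1 := by
      linear_combination (-(d^3))*h0 + (-(3*d^2*c))*h1 + (-(3*d*c^2))*h2 + (-(c^3))*h3 + hD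
    have hE1 : r₁*(d*p₁+c*q₁)^2*((2*β*c*d+n*c^2)*p₁+(d^2-β*c^2)*q₁) + r₂*(d*p₂+c*q₂)^2*((2*β*c*d+n*c^2)*p₂+(d^2-β*c^2)*q₂) = 0 := by
      linear_combination (-(d^2*(2*β*c*d+n*c^2)))*h0 + (-(d^2*(d^2-β*c^2)+2*d*c*(2*β*c*d+n*c^2)))*h1
        + (-(2*d*c*(d^2-β*c^2)+c^2*(2*β*c*d+n*c^2)))*h2 + (-(c^2*(d^2-β*c^2)))*h3
    have hE2 : r₁*(d*p₁+c*q₁)*((2*β*c*d+n*c^2)*p₁+(d^2-β*c^2)*q₁)^2 + r₂*(d*p₂+c*q₂)*((2*β*c*d+n*c^2)*p₂+(d^2-β*c^2)*q₂)^2 = 0 := by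
      linear_combination (-(d*(2*β*c*d+n*c^2)^2))*h0 + (-(2*d*(2*β*c*d+n*c^2)*(d^2-β*c^2)+c*(2*β*c*d+n*c^2)^2))*h1
        + (-(d*(d^2-β*c^2)^2+2*c*(2*β*c*d+n*c^2)*(d^2-β*c^2)))*h2 + (-(c*(d^2-β*c^2)^2))*h3 + (-(n*c*d) - β*d^2 - β^2*c^2)*hD - hβ'0
    have hhess := hess r₁ r₂ (d*p₁+c*q₁) ((2*β*c*d+n*c^2)*p₁+(d^2-β*c^2)*q₁) (d*p₂+c*q₂) ((2*β*c*d+n*c^2)*p₂+(d^2-β*c^2)*q₂) hE0 hE1 hE2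
    have hΔ : (d*p₁+c*q₁)*((2*β*c*d+n*c^2)*p₂+(d^2-β*c^2)*q₂) - ((2*β*c*d+n*c^2)*p₁+(d^2-β*c^2)*q₁)*(d*p₂+c*q₂) = p₁*q₂ - q₁*p₂ := by
      linear_combination (p₁*q₂-q₁*p₂)*hD
    have hΔne : (d*p₁+c*q₁)*((2*β*c*d+n*c^2)*p₂+(d^2-β*c^2)*q₂) - ((2*β*c*d+n*c^2)*p₁+(d^2-β*c^2)*q₁)*(d*p₂+c*q₂) ≠ 0 := by
      rw [hΔ]; exact cross_ne p₁ q₁ p₂ q₂ hg₂ hθ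
    have hPP : (d*p₁+c*q₁)*(d*p₂+c*q₂) = 0 := by
      by_contra hne
      exact (mul_ne_zero (mul_ne_zero (mul_ne_zero hr₁ hr₂) (pow_ne_zero 2 hΔne)) hne) hhess
    have hP₂0 : (d*p₂+c*q₂) = 0 := by
      rcases mul_eq_zero.mp hPP with h|h
      · exact absurd h hP₁ne
      · exact h
    have hp2e : p₂ = -(c*((2*β*c*d+n*c^2)*p₂+(d^2-β*c^2)*q₂)) := by
      linear_combination (d^2-β*c^2)*hP₂0 - p₂*hD
    have hq2e : q₂ = d*((2*β*c*d+n*c^2)*p₂+(d^2-β*c^2)*q₂) := by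
      linear_combination (-(2*β*c*d+n*c^2))*hP₂0 - q₂*hD
    have hQ₂ne : ((2*β*c*d+n*c^2)*p₂+(d^2-β*c^2)*q₂) ≠ 0 := by
      intro h
      rw [h] at hp2e hq2e
      simp only [mul_zero, neg_zero] at hp2e hq2e
      rw [hp2e, hq2e] at hg₂
      simp [Int.gcd] at hg₂
    have hp2ne : p₂ ≠ 0 := by
      rw [hp2e]
      exact neg_ne_zero.mpr (mul_ne_zero hc hQ₂ne)
    rw [coe_lt_theta] at hlt2
    rcases hlt2 with h | h
    · exact hp2ne h
    · have hpos := (ndc_lt p₂ q₂ c d hp2ne hc).mp h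
      rw [hP₂0] at hpos
      simp at hpos
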